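/- Fix x ∈ [1/2, M], let F be a continuous strictly increasing CDF on [1/2, M] with density f, and let β(x) = ∫_{1/2}^x f(t)(e^t − 1)/(F(t) + (1 − F(t))e^t) dt. Define g(y) = x·e^y·F(β^{−1}(y)) + x(1 − e^y)/(1 − e^{−x}) for y in the range of β. Then g'(y) = (x e^y / ((1 − e^{−x})(e^{β^{−1}(y)} − 1))) · (1 − e^{−x + β^{−1}(y)}); in particular g'(y) > 0 for y < β(x), g'(β(x)) = 0, and g'(y) < 0 for y > β(x), so g attains its unique global maximum at y = β(x). -/

import Mathlib

open Set MeasureTheory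

lemma aux_inv_continuousOn {p q : ℝ} (hpq : p ≤ q) {θ ψ : ℝ → ℝ}
    (hθc : ContinuousOn θ (Set.Icc p q)) (hθm : StrictMonoOn θ (Set.Icc p q))
    (hψ : ∀ t ∈ Set.Icc p q, ψ (θ t) = t) :
    ContinuousOn ψ (Set.Icc (θ p) (θ q)) := by
  have hpm : p ∈ Icc p q := ⟨le_refl p, hpq⟩
  have hqm : q ∈ Icc p q := ⟨hpq, le_refl q⟩
  have hsurj : ∀ u ∈ Icc (θ p) (θ q), ∃ t ∈ Icc p q, θ t = u := by
    intro u hu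
    obtain ⟨t, ht, htu⟩ := intermediate_value_Icc hpq hθc hu
    exact ⟨t, ht, htu⟩
  have hψm : StrictMonoOn ψ (Icc (θ p) (θ q)) := by
    intro u1 h1 u2 h2 hlt
    obtain ⟨t1, ht1, rfl⟩ := hsurj u1 h1
    obtain ⟨t2, ht2, rfl⟩ := hsurj u2 h2
    rw [hψ t1 ht1, hψ t2 ht2]
    exact (hθm.lt_iff_lt ht1 ht2).mp hlt
  intro u hu
  obtain ⟨t, ht, rfl⟩ := hsurj u hu
  have htu : ψ (θ t) = t := hψ t ht
  have hR : t < q → ContinuousWithinAt ψ (Ici (θ t)) (θ t) := by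
    intro htq
    apply hψm.continuousWithinAt_right_of_exists_between
      (Icc_mem_nhdsGE_of_mem ⟨hu.1, hθm.lt_iff_lt ht hqm |>.mpr htq⟩)
    intro b hb
    rw [htu] at hb ⊢
    refine ⟨θ (min b q), ⟨(hθm.le_iff_le hpm ?_).mpr ?_, (hθm.le_iff_le ?_ hqm).mpr ?_⟩, ?_⟩
    · exact ⟨le_trans ht.1 (le_of_lt (lt_min hb htq)), min_le_right _ _⟩
    · exact le_trans ht.1 (le_of_lt (lt_min hb htq))
    · exact ⟨le_trans ht.1 (le_of_lt (lt_min hb htq)), min_le_right _ _⟩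
    · exact min_le_right _ _
    · rw [hψ _ ⟨le_trans ht.1 (le_of_lt (lt_min hb htq)), min_le_right _ _⟩]
      exact ⟨lt_min hb htq, min_le_left _ _⟩
  have hL : p < t → ContinuousWithinAt ψ (Iic (θ t)) (θ t) := by
    intro hpt
    apply hψm.continuousWithinAt_left_of_exists_between
      (Icc_mem_nhdsLE_of_mem ⟨hθm.lt_iff_lt hpm ht |>.mpr hpt, hu.2⟩)
    intro b hb
    rw [htu] at hb ⊢
    have hvm : max b p ∈ Icc p q := ⟨le_max_right _ _, le_trans (le_of_lt (max_lt hb hpt)) ht.2⟩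
    refine ⟨θ (max b p), ⟨(hθm.le_iff_le hpm hvm).mpr (le_max_right _ _),
      (hθm.le_iff_le hvm hqm).mpr hvm.2⟩, ?_⟩
    rw [hψ _ hvm]
    exact ⟨le_max_left _ _, max_lt hb hpt⟩
  rcases eq_or_lt_of_le ht.1 with hp | hp
  · rcases eq_or_lt_of_le ht.2 with hq | hq
    · subst hq
      have : Icc (θ p) (θ t) = {θ t} := by rw [← hp]; exact Icc_self _
      rw [this]
      exact continuousWithinAt_singleton
    · exact (hR hq).mono (by rw [← hp]; exact Icc_subset_Ici_self)
  · rcases eq_or_lt_of_le ht.2 with hq | hq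
    · subst hq
      exact (hL hp).mono Icc_subset_Iic_self
    · exact ((hL hp).union (hR hq)).mono (by intro z _; simp [le_or_gt])

theorem stmt10 (M x : ℝ) (hM : 1/2 < M) (hx : x ∈ Set.Icc (1/2 : ℝ) M)
    (F f β βinv : ℝ → ℝ)
    (hFderiv : ∀ t ∈ Set.Icc (1/2 : ℝ) M, HasDerivAt F (f t) t)
    (hfpos : ∀ t ∈ Set.Icc (1/2 : ℝ) M, 0 < f t)
    (hFmono : StrictMonoOn F (Set.Icc (1/2 : ℝ) M))
    (hF0 : F (1/2) = 0) (hF1 : F M = 1)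
    (hβ : ∀ y : ℝ, β y =
      ∫ t in (1/2 : ℝ)..y, f t * (Real.exp t - 1) / (F t + (1 - F t) * Real.exp t))
    (hinv : ∀ t ∈ Set.Icc (1/2 : ℝ) M, βinv (β t) = t)
    (hinv2 : ∀ y ∈ Set.Icc (β (1/2)) (β M), β (βinv y) = y)
    (g D : ℝ → ℝ)
    (hg : ∀ y : ℝ, g y =
      x * Real.exp y * F (βinv y) + x * (1 - Real.exp y) / (1 - Real.exp (-x)))
    (hD : ∀ y : ℝ, D y =
      x * Real.exp y / ((1 - Real.exp (-x)) * (Real.exp (βinv y) - 1)) *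
        (1 - Real.exp (-x + βinv y))) :
    (∀ y ∈ Set.Ioo (β (1/2)) (β M), HasDerivAt g (D y) y) ∧
    (∀ y ∈ Set.Ioo (β (1/2)) (β M), y < β x → 0 < D y) ∧
    (∀ y ∈ Set.Ioo (β (1/2)) (β M), y = β x → D y = 0) ∧
    (∀ y ∈ Set.Ioo (β (1/2)) (β M), β x < y → D y < 0) ∧
    (∀ y ∈ Set.Icc (β (1/2)) (β M), y ≠ β x → g y < g (β x)) := by
  have haM : (1/2:ℝ) ≤ M := le_of_lt hM
  have hmem2 : (1/2:ℝ) ∈ Icc (1/2:ℝ) M := ⟨le_refl _, haM⟩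
  have hmemM : M ∈ Icc (1/2:ℝ) M := ⟨haM, le_refl _⟩
  have hFc : ContinuousOn F (Icc (1/2:ℝ) M) :=
    fun t ht => ((hFderiv t ht).continuousAt).continuousWithinAt
  have hF01 : ∀ t ∈ Icc (1/2:ℝ) M, 0 ≤ F t ∧ F t ≤ 1 := by
    intro t ht
    constructor
    · rw [← hF0]; exact hFmono.monotoneOn hmem2 ht ht.1
    · rw [← hF1]; exact hFmono.monotoneOn ht hmemM ht.2
  have hexp1 : ∀ t ∈ Icc (1/2:ℝ) M, 1 < Real.exp t := by
    intro t ht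
    have h0 : (0:ℝ) < t := lt_of_lt_of_le (by norm_num) ht.1
    calc (1:ℝ) = Real.exp 0 := (Real.exp_zero).symm
    _ < Real.exp t := Real.exp_lt_exp.mpr h0
  have hden : ∀ t ∈ Icc (1/2:ℝ) M, 1 ≤ F t + (1 - F t) * Real.exp t := by
    intro t ht
    nlinarith [(hF01 t ht).1, (hF01 t ht).2, hexp1 t ht]
  have hdenpos : ∀ t ∈ Icc (1/2:ℝ) M, 0 < F t + (1 - F t) * Real.exp t :=
    fun t ht => lt_of_lt_of_le one_pos (hden t ht)
  -- inverse of F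
  set Finv : ℝ → ℝ := Function.invFunOn F (Icc (1/2:ℝ) M) with hFinvdef
  have hFsurj : ∀ u ∈ Icc (0:ℝ) 1, ∃ t ∈ Icc (1/2:ℝ) M, F t = u := by
    intro u hu
    have h := intermediate_value_Icc haM hFc
    rw [hF0, hF1] at h
    obtain ⟨t, ht, htu⟩ := h hu
    exact ⟨t, ht, htu⟩
  have hFinvF : ∀ t ∈ Icc (1/2:ℝ) M, Finv (F t) = t :=
    fun t ht => hFmono.injOn.leftInvOn_invFunOn ht
  have hFFinv : ∀ u ∈ Icc (0:ℝ) 1, Finv u ∈ Icc (1/2:ℝ) M ∧ F (Finv u) = u := by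
    intro u hu
    obtain ⟨t, ht, rfl⟩ := hFsurj u hu
    rw [hFinvF t ht]
    exact ⟨ht, rfl⟩
  have hFinvCont : ContinuousOn Finv (Icc (0:ℝ) 1) := by
    have h := aux_inv_continuousOn haM hFc hFmono hFinvF
    rwa [hF0, hF1] at h
  -- W and A
  set W : ℝ → ℝ := fun u =>
    (Real.exp (Finv u) - 1) / (F (Finv u) + (1 - F (Finv u)) * Real.exp (Finv u)) with hWdef
  have hwcont : ContinuousOn (fun t => (Real.exp t - 1) / (F t + (1 - F t) * Real.exp t))
      (Icc (1/2:ℝ) M) := by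
    apply ContinuousOn.div
    · exact (Real.continuous_exp.continuousOn).sub continuousOn_const
    · exact hFc.add ((continuousOn_const.sub hFc).mul Real.continuous_exp.continuousOn)
    · intro t ht; exact ne_of_gt (hdenpos t ht)
  have hWcont : ContinuousOn W (Icc (0:ℝ) 1) :=
    hwcont.comp hFinvCont (fun u hu => (hFFinv u hu).1)
  have hWpos : ∀ u ∈ Icc (0:ℝ) 1, 0 < W u := by
    intro u hu
    have h1 := (hFFinv u hu).1
    exact div_pos (sub_pos.mpr (hexp1 _ h1)) (hdenpos _ h1)
  set A : ℝ → ℝ := fun u => ∫ v in (0:ℝ)..u, W v with hAdef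
  -- key : β = A ∘ F on Icc
  have key : ∀ y ∈ Icc (1/2:ℝ) M, β y = A (F y) := by
    intro y hy
    have hIccy : ∀ t ∈ Icc (1/2:ℝ) y, t ∈ Icc (1/2:ℝ) M :=
      fun t ht => ⟨ht.1, le_trans ht.2 hy.2⟩
    have himg : F '' Icc (1/2:ℝ) y = Icc (0:ℝ) (F y) := by
      apply Subset.antisymm
      · rintro u ⟨t, ht, rfl⟩
        exact ⟨(hF01 t (hIccy t ht)).1, hFmono.monotoneOn (hIccy t ht) hy ht.2⟩
      · have h := intermediate_value_Icc hy.1 (hFc.mono hIccy)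
        rw [hF0] at h
        exact h
    have hchg := MeasureTheory.integral_image_eq_integral_abs_deriv_smul
      (measurableSet_Icc : MeasurableSet (Icc (1/2:ℝ) y))
      (fun t ht => (hFderiv t (hIccy t ht)).hasDerivWithinAt)
      (hFmono.injOn.mono hIccy) W
    rw [hβ]
    calc ∫ t in (1/2:ℝ)..y, f t * (Real.exp t - 1) / (F t + (1 - F t) * Real.exp t)
        = ∫ t in Icc (1/2:ℝ) y, f t * (Real.exp t - 1) / (F t + (1 - F t) * Real.exp t) := by
          rw [intervalIntegral.integral_of_le hy.1, MeasureTheory.integral_Icc_eq_integral_Ioc]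
      _ = ∫ t in Icc (1/2:ℝ) y, |f t| • W (F t) := by
          apply MeasureTheory.setIntegral_congr_fun measurableSet_Icc
          intro t ht
          have hts := hIccy t ht
          simp only [smul_eq_mul, hWdef]
          rw [abs_of_pos (hfpos t hts), hFinvF t hts, mul_div_assoc]
      _ = ∫ u in F '' Icc (1/2:ℝ) y, W u := hchg.symm
      _ = ∫ u in Icc (0:ℝ) (F y), W u := by rw [himg]
      _ = A (F y) := by
          rw [hAdef]
          simp only []
          rw [intervalIntegral.integral_of_le (hF01 y hy).1,
            MeasureTheory.integral_Icc_eq_integral_Ioc]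
  -- continuity and monotonicity of A and β
  have hAcont : ContinuousOn A (Icc (0:ℝ) 1) := by
    have h := intervalIntegral.continuousOn_primitive_interval
      (a := (0:ℝ)) (b := 1) (μ := volume) (f := W) ?_
    · rwa [uIcc_of_le (by norm_num : (0:ℝ) ≤ 1)] at h
    · rw [uIcc_of_le (by norm_num : (0:ℝ) ≤ 1)]
      exact hWcont.integrableOn_Icc
  have hWint : ∀ u1 ∈ Icc (0:ℝ) 1, ∀ u2 ∈ Icc (0:ℝ) 1, IntervalIntegrable W volume u1 u2 := by
    intro u1 h1 u2 h2
    exact (hWcont.mono (uIcc_subset_Icc h1 h2)).intervalIntegrable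
  have hAmono : StrictMonoOn A (Icc (0:ℝ) 1) := by
    intro u1 h1 u2 h2 hlt
    have hzero : (0:ℝ) ∈ Icc (0:ℝ) 1 := by norm_num
    have hsub : A u2 - A u1 = ∫ v in u1..u2, W v := by
      rw [hAdef]
      exact intervalIntegral.integral_interval_sub_left (hWint 0 hzero u2 h2)
        (hWint 0 hzero u1 h1)
    have hpos : 0 < ∫ v in u1..u2, W v := by
      apply intervalIntegral.intervalIntegral_pos_of_pos_on (hWint u1 h1 u2 h2) _ hlt
      intro v hv
      exact hWpos v ⟨le_trans h1.1 (le_of_lt hv.1), le_trans (le_of_lt hv.2) h2.2⟩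
    linarith
  have hβmono : StrictMonoOn β (Icc (1/2:ℝ) M) := by
    intro t1 h1 t2 h2 hlt
    rw [key t1 h1, key t2 h2]
    exact hAmono ⟨(hF01 t1 h1).1, (hF01 t1 h1).2⟩ ⟨(hF01 t2 h2).1, (hF01 t2 h2).2⟩
      (hFmono h1 h2 hlt)
  have hβcont : ContinuousOn β (Icc (1/2:ℝ) M) := by
    apply ContinuousOn.congr (hAcont.comp hFc (fun t ht => ⟨(hF01 t ht).1, (hF01 t ht).2⟩))
    intro y hy
    exact key y hy
  -- βinv properties
  have hβsurj : ∀ y ∈ Icc (β (1/2)) (β M), ∃ t ∈ Icc (1/2:ℝ) M, β t = y := by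
    intro y hy
    obtain ⟨t, ht, htu⟩ := intermediate_value_Icc haM hβcont hy
    exact ⟨t, ht, htu⟩
  have hβinvmem : ∀ y ∈ Icc (β (1/2)) (β M), βinv y ∈ Icc (1/2:ℝ) M ∧ β (βinv y) = y := by
    intro y hy
    obtain ⟨t, ht, rfl⟩ := hβsurj y hy
    rw [hinv t ht]
    exact ⟨ht, rfl⟩
  have hβinvcont : ContinuousOn βinv (Icc (β (1/2)) (β M)) :=
    aux_inv_continuousOn haM hβcont hβmono hinv
  -- derivative of β
  have hβderiv : ∀ t ∈ Ioo (1/2:ℝ) M,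
      HasDerivAt β (f t * (Real.exp t - 1) / (F t + (1 - F t) * Real.exp t)) t := by
    intro t ht
    have hts : t ∈ Icc (1/2:ℝ) M := Ioo_subset_Icc_self ht
    have hFt : F t ∈ Ioo (0:ℝ) 1 := by
      constructor
      · rw [← hF0]; exact hFmono hmem2 hts ht.1
      · rw [← hF1]; exact hFmono hts hmemM ht.2
    have hFtIcc : F t ∈ Icc (0:ℝ) 1 := Ioo_subset_Icc_self hFt
    have hAd : HasDerivAt A (W (F t)) (F t) := by
      apply intervalIntegral.integral_hasDerivAt_right
      · exact hWint 0 (by norm_num) (F t) hFtIcc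
      · exact (hWcont.mono Ioo_subset_Icc_self).stronglyMeasurableAtFilter isOpen_Ioo (F t) hFt
      · exact hWcont.continuousAt (Icc_mem_nhds hFt.1 hFt.2)
    have hcomp : HasDerivAt (A ∘ F) (W (F t) * f t) t := hAd.comp t (hFderiv t hts)
    have heq : β =ᶠ[nhds t] (A ∘ F) := by
      filter_upwards [Ioo_mem_nhds ht.1 ht.2] with z hz
      exact key z (Ioo_subset_Icc_self hz)
    have hfin := hcomp.congr_of_eventuallyEq heq
    refine hfin.congr_deriv (Eq.symm ?_)
    rw [hWdef]
    simp only []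
    rw [hFinvF t hts, mul_div_assoc, mul_comm]
  -- positivity basics
  have hx0 : (0:ℝ) < x := lt_of_lt_of_le (by norm_num) hx.1
  have hexm : Real.exp (-x) < 1 := Real.exp_lt_one_iff.mpr (neg_lt_zero.mpr hx0)
  have h1em : (0:ℝ) < 1 - Real.exp (-x) := by linarith
  -- main derivative claim
  have hβx : β x ∈ Icc (β (1/2)) (β M) :=
    ⟨hβmono.monotoneOn hmem2 hx hx.1, hβmono.monotoneOn hx hmemM hx.2⟩
  have hmain : ∀ y ∈ Ioo (β (1/2)) (β M), HasDerivAt g (D y) y := by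
    intro y hy
    have hyIcc : y ∈ Icc (β (1/2)) (β M) := Ioo_subset_Icc_self hy
    obtain ⟨htmem, hβt⟩ := hβinvmem y hyIcc
    have htIoo : βinv y ∈ Ioo (1/2:ℝ) M := by
      constructor
      · rcases eq_or_lt_of_le htmem.1 with h | h
        · exfalso; rw [← h] at hβt; exact absurd hβt (ne_of_lt hy.1)
        · exact h
      · rcases eq_or_lt_of_le htmem.2 with h | h
        · exfalso; rw [h] at hβt; exact absurd hβt.symm (ne_of_lt hy.2)
        · exact h
    set t := βinv y with htdef
    have hφpos : 0 < f t * (Real.exp t - 1) / (F t + (1 - F t) * Real.exp t) :=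
      div_pos (mul_pos (hfpos t htmem) (sub_pos.mpr (hexp1 t htmem))) (hdenpos t htmem)
    have hβinv' : HasDerivAt βinv
        (f t * (Real.exp t - 1) / (F t + (1 - F t) * Real.exp t))⁻¹ y := by
      apply HasDerivAt.of_local_left_inverse
        (hβinvcont.continuousAt (Icc_mem_nhds hy.1 hy.2)) (hβderiv t htIoo) (ne_of_gt hφpos)
      filter_upwards [Ioo_mem_nhds hy.1 hy.2] with z hz
      exact hinv2 z (Ioo_subset_Icc_self hz)
    have hFcomp : HasDerivAt (fun z => F (βinv z))
        (f t * (f t * (Real.exp t - 1) / (F t + (1 - F t) * Real.exp t))⁻¹) y :=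
      (hFderiv t htmem).comp y hβinv'
    have he : HasDerivAt (fun z => x * Real.exp z) (x * Real.exp y) y :=
      (Real.hasDerivAt_exp y).const_mul x
    have hd1 : HasDerivAt (fun z => x * Real.exp z * F (βinv z))
        (x * Real.exp y * F (βinv y) +
          (x * Real.exp y) * (f t * (f t * (Real.exp t - 1) /
            (F t + (1 - F t) * Real.exp t))⁻¹)) y := by
      exact he.mul hFcomp
    have hd2 : HasDerivAt (fun z => x * (1 - Real.exp z) / (1 - Real.exp (-x)))
        (x * (0 - Real.exp y) / (1 - Real.exp (-x))) y := by
      have h3 : HasDerivAt (fun z => x * (1 - Real.exp z)) (x * (0 - Real.exp y)) y :=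
        ((hasDerivAt_const y (1:ℝ)).sub (Real.hasDerivAt_exp y)).const_mul x
      exact h3.div_const _
    have hsum := hd1.add hd2
    have hgfun : g = fun z =>
        x * Real.exp z * F (βinv z) + x * (1 - Real.exp z) / (1 - Real.exp (-x)) := funext hg
    rw [hgfun]
    refine hsum.congr_deriv (Eq.symm ?_)
    rw [hD, ← htdef]
    have hfne : f t ≠ 0 := ne_of_gt (hfpos t htmem)
    have hexpne : Real.exp t - 1 ≠ 0 := ne_of_gt (sub_pos.mpr (hexp1 t htmem))
    have hdenne : F t + (1 - F t) * Real.exp t ≠ 0 := ne_of_gt (hdenpos t htmem)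
    have h1emne : (1:ℝ) - Real.exp (-x) ≠ 0 := ne_of_gt h1em
    rw [Real.exp_add]
    field_simp
    ring
  -- signs
  have hsign : ∀ y ∈ Ioo (β (1/2)) (β M),
      ((y < β x → 0 < D y) ∧ (y = β x → D y = 0) ∧ (β x < y → D y < 0)) := by
    intro y hy
    have hyIcc : y ∈ Icc (β (1/2)) (β M) := Ioo_subset_Icc_self hy
    obtain ⟨htmem, hβt⟩ := hβinvmem y hyIcc
    set t := βinv y with htdef
    have hP : 0 < x * Real.exp y / ((1 - Real.exp (-x)) * (Real.exp t - 1)) :=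
      div_pos (mul_pos hx0 (Real.exp_pos y))
        (mul_pos h1em (sub_pos.mpr (hexp1 t htmem)))
    have hcmp : y < β x ↔ t < x := by
      rw [← hβt]
      exact hβmono.lt_iff_lt htmem hx
    have hcmp2 : β x < y ↔ x < t := by
      rw [← hβt]
      exact hβmono.lt_iff_lt hx htmem
    refine ⟨?_, ?_, ?_⟩
    · intro hlt
      rw [hD, ← htdef]
      apply mul_pos hP
      have : -x + t < 0 := by linarith [hcmp.mp hlt]
      have := Real.exp_lt_one_iff.mpr this
      linarith
    · intro heq
      rw [hD, ← htdef]
      have : t = x := by rw [htdef, heq, hinv x hx]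
      rw [this]
      simp
    · intro hlt
      rw [hD, ← htdef]
      apply mul_neg_of_pos_of_neg hP
      have h0 : (0:ℝ) < -x + t := by linarith [hcmp2.mp hlt]
      have h1 : (1:ℝ) < Real.exp (-x + t) := by
        calc (1:ℝ) = Real.exp 0 := (Real.exp_zero).symm
        _ < Real.exp (-x + t) := Real.exp_lt_exp.mpr h0
      linarith
  -- global maximum
  have hgcont : ContinuousOn g (Icc (β (1/2)) (β M)) := by
    have hgfun : g = fun z =>
        x * Real.exp z * F (βinv z) + x * (1 - Real.exp z) / (1 - Real.exp (-x)) := funext hg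
    rw [hgfun]
    apply ContinuousOn.add
    · exact (continuousOn_const.mul Real.continuous_exp.continuousOn).mul
        (hFc.comp hβinvcont (fun z hz => (hβinvmem z hz).1))
    · exact (continuousOn_const.mul
        (continuousOn_const.sub Real.continuous_exp.continuousOn)).div_const _
  have hmonoL : StrictMonoOn g (Icc (β (1/2)) (β x)) := by
    apply strictMonoOn_of_deriv_pos (convex_Icc _ _)
      (hgcont.mono (Icc_subset_Icc_right hβx.2))
    intro z hz
    rw [interior_Icc] at hz
    have hzIoo : z ∈ Ioo (β (1/2)) (β M) := ⟨hz.1, lt_of_lt_of_le hz.2 hβx.2⟩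
    rw [(hmain z hzIoo).deriv]
    exact (hsign z hzIoo).1 hz.2
  have hantiR : StrictAntiOn g (Icc (β x) (β M)) := by
    apply strictAntiOn_of_deriv_neg (convex_Icc _ _)
      (hgcont.mono (Icc_subset_Icc_left hβx.1))
    intro z hz
    rw [interior_Icc] at hz
    have hzIoo : z ∈ Ioo (β (1/2)) (β M) := ⟨lt_of_le_of_lt hβx.1 hz.1, hz.2⟩
    rw [(hmain z hzIoo).deriv]
    exact (hsign z hzIoo).2.2 hz.1
  refine ⟨hmain, fun y hy => (hsign y hy).1, fun y hy => (hsign y hy).2.1,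
    fun y hy => (hsign y hy).2.2, ?_⟩
  intro y hy hne
  rcases lt_or_gt_of_ne hne with h | h
  · exact hmonoL ⟨hy.1, le_of_lt h⟩ ⟨hβx.1, le_refl _⟩ h
  · exact hantiR ⟨le_refl _, hβx.2⟩ ⟨le_of_lt h, hy.2⟩ h
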